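/- Assume (A1)–(A4) as in the robust cost-efficiency theorem and that F₀^{-1} ∘ F_{ℓ*}^{ℙ*} ∈ 𝔽, and let X* = F₀^{-1}(F_{ℓ*}^{ℙ*}(ℓ*)). Let ℙ ∈ 𝒫 be such that F_{ℓ^ℙ}^ℙ is continuous and such that X := F₀^{-1}(F_{ℓ^ℙ}^ℙ(ℓ^ℙ)) has finite ℚ-expectation. Then E_ℚ[X] ≤ E_ℚ[X*]; if moreover F_X^ℙ ≠ F_{X*}^ℙ, then E_ℚ[X] < E_ℚ[X*]. (Ambiguity increases the cost of reaching the target distribution F₀.) -/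

import Mathlib

open MeasureTheory Set Real

noncomputable section

/-- CDF of a distribution (measure) on `ℝ`. -/
def mcdf (μ : Measure ℝ) : ℝ → ℝ := fun x => (μ (Iic x)).toReal

/-- CDF of the random variable `X` under `P`. -/
def rvCdf {Ω : Type*} [MeasurableSpace Ω] (P : Measure Ω) (X : Ω → ℝ) : ℝ → ℝ :=
  mcdf (P.map X)

/-- Left-continuous quantile function of a distribution function `F`. -/
def quantile (F : ℝ → ℝ) (p : ℝ) : ℝ := sInf {x : ℝ | p ≤ F x}

/-- Integral stochastic ordering w.r.t. a class `𝔽`, between distributions on `ℝ`. -/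
def IntOrder (𝔽 : Set (ℝ → ℝ)) (μ ν : Measure ℝ) : Prop :=
  ∀ f ∈ 𝔽, Integrable f μ → Integrable f ν → ∫ x, f x ∂μ ≤ ∫ x, f x ∂ν

/-- Real-valued likelihood ratio `dP/dQ`. -/
def lr {Ω : Type*} [MeasurableSpace Ω] (P Q : Measure Ω) : Ω → ℝ :=
  fun ω => (P.rnDeriv Q ω).toReal

/-- A payoff: a nonnegative measurable random variable with finite `Q`-expectation. -/
def IsPayoff {Ω : Type*} [MeasurableSpace Ω] (Q : Measure Ω) (X : Ω → ℝ) : Prop :=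
  Measurable X ∧ (∀ ω, 0 ≤ X ω) ∧ Integrable X Q

/-- `X` is a `P`-cost-efficient payoff. -/
def CostEfficient {Ω : Type*} [MeasurableSpace Ω] (Q P : Measure Ω) (X : Ω → ℝ) : Prop :=
  IsPayoff Q X ∧ ∀ Y : Ω → ℝ, IsPayoff Q Y → P.map Y = P.map X →
    ∫ ω, X ω ∂Q ≤ ∫ ω, Y ω ∂Q

/-- Composition-consistency of `𝔽`. -/
def CompConsistent (𝔽 : Set (ℝ → ℝ)) : Prop := ∀ f ∈ 𝔽, ∀ g ∈ 𝔽, f ∘ g ∈ 𝔽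

/-- Cost-consistency of `𝔽`. -/
def CostConsistent {Ω : Type*} [MeasurableSpace Ω]
    (Q : Measure Ω) (Ps : Set (Measure Ω)) (𝔽 : Set (ℝ → ℝ)) : Prop :=
  ∀ P ∈ Ps, ∀ X Y : Ω → ℝ, CostEfficient Q P X → CostEfficient Q P Y →
    IntOrder 𝔽 (P.map X) (P.map Y) →
      (∫ ω, X ω ∂Q ≤ ∫ ω, Y ω ∂Q) ∧
      (P.map X ≠ P.map Y → ∫ ω, X ω ∂Q < ∫ ω, Y ω ∂Q)

/-- Admissible set `B_{F₀}^𝔽` of the `𝔽`-robust cost-efficiency problem, where the target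
distribution `F₀` is represented by the probability measure `μ₀` on `ℝ`. -/
def Bset {Ω : Type*} [MeasurableSpace Ω] (Q : Measure Ω) (Ps : Set (Measure Ω))
    (𝔽 : Set (ℝ → ℝ)) (μ₀ : Measure ℝ) : Set (Ω → ℝ) :=
  {X | IsPayoff Q X ∧ ∀ P ∈ Ps, IntOrder 𝔽 μ₀ (P.map X)}



section Aux
open scoped ENNReal

section cdfAPI

variable (ν : Measure ℝ) [IsProbabilityMeasure ν]

lemma mcdf_eq_cdf : mcdf ν = ⇑(ProbabilityTheory.cdf ν) := by
  funext x
  rw [mcdf, ProbabilityTheory.cdf_eq_real, measureReal_def]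

lemma mcdf_mono : Monotone (mcdf ν) := by
  rw [mcdf_eq_cdf]; exact ProbabilityTheory.monotone_cdf ν

lemma mcdf_nonneg (x : ℝ) : 0 ≤ mcdf ν x := by
  rw [mcdf_eq_cdf]; exact ProbabilityTheory.cdf_nonneg (μ := ν) x

lemma mcdf_le_one (x : ℝ) : mcdf ν x ≤ 1 := by
  rw [mcdf_eq_cdf]; exact ProbabilityTheory.cdf_le_one (μ := ν) x

lemma ofReal_mcdf (x : ℝ) : ENNReal.ofReal (mcdf ν x) = ν (Iic x) := by
  rw [mcdf_eq_cdf]; exact ProbabilityTheory.ofReal_cdf (μ := ν) x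

lemma tendsto_mcdf_atTop : Filter.Tendsto (mcdf ν) Filter.atTop (nhds 1) := by
  rw [mcdf_eq_cdf]; exact ProbabilityTheory.tendsto_cdf_atTop ν

lemma tendsto_mcdf_atBot : Filter.Tendsto (mcdf ν) Filter.atBot (nhds 0) := by
  rw [mcdf_eq_cdf]; exact ProbabilityTheory.tendsto_cdf_atBot ν

lemma mcdf_rightCont (x : ℝ) : ContinuousWithinAt (mcdf ν) (Ici x) x := by
  rw [mcdf_eq_cdf]
  exact (ProbabilityTheory.cdf ν).right_continuous x

lemma mcdf_measurable : Measurable (mcdf ν) := (mcdf_mono ν).measurable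

end cdfAPI

section quantileAPI

lemma quantile_measurable (H : ℝ → ℝ) : Measurable (quantile H) := by
  set M : Set ℝ := {p | {x | p ≤ H x}.Nonempty ∧ BddBelow {x | p ≤ H x}} with hMdef
  have hanti : ∀ p q : ℝ, p ≤ q → {x | q ≤ H x} ⊆ {x | p ≤ H x} :=
    fun p q h x hx => le_trans h hx
  have hMord : M.OrdConnected := by
    constructor
    intro p hp q hq z hz
    exact ⟨hq.1.mono (hanti z q hz.2), hp.2.mono (hanti p z hz.1)⟩
  have hmono : MonotoneOn (quantile H) M := by
    intro p hp q hq hpq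
    exact csInf_le_csInf hp.2 hq.1 (hanti p q hpq)
  have hzero : ∀ p, p ∉ M → quantile H p = 0 := by
    intro p hp
    rw [hMdef, mem_setOf_eq, not_and_or] at hp
    rcases hp with hp | hp
    · rw [Set.not_nonempty_iff_eq_empty] at hp
      rw [quantile, hp, Real.sInf_empty]
    · exact Real.sInf_of_not_bddBelow hp
  apply measurable_of_Iio
  intro a
  have : quantile H ⁻¹' Iio a =
      {p | p ∈ M ∧ quantile H p < a} ∪ (Mᶜ ∩ {p : ℝ | (0:ℝ) < a}) := by
    ext p
    by_cases hp : p ∈ M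
    · simp only [mem_preimage, mem_Iio, mem_union, mem_setOf_eq, mem_inter_iff, mem_compl_iff]
      tauto
    · simp [hp, mem_preimage, hzero p hp, mem_setOf_eq]
  rw [this]
  have h1 : MeasurableSet {p | p ∈ M ∧ quantile H p < a} := by
    apply Set.OrdConnected.measurableSet
    constructor
    intro x hx y hy z hz
    refine ⟨hMord.out hx.1 hy.1 hz, lt_of_le_of_lt ?_ hy.2⟩
    exact hmono (hMord.out hx.1 hy.1 hz) hy.1 hz.2
  refine h1.union ((hMord.measurableSet.compl).inter ?_)
  by_cases ha : (0:ℝ) < a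
  · simp [ha]
  · simp [ha]

variable (ν : Measure ℝ) [IsProbabilityMeasure ν]

lemma not_bddBelow_univ_real : ¬ BddBelow (univ : Set ℝ) := by
  rintro ⟨b, hb⟩
  have := hb (mem_univ (b - 1))
  linarith

lemma quantile_S_univ {p : ℝ} (hp : p ≤ 0) : {x | p ≤ mcdf ν x} = univ :=
  eq_univ_of_forall fun x => le_trans hp (mcdf_nonneg ν x)

lemma quantile_of_nonpos {p : ℝ} (hp : p ≤ 0) : quantile (mcdf ν) p = 0 := by
  rw [quantile, quantile_S_univ ν hp]
  exact Real.sInf_of_not_bddBelow not_bddBelow_univ_real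

lemma quantile_nonneg (hν0 : ν (Iio 0) = 0) (p : ℝ) : 0 ≤ quantile (mcdf ν) p := by
  rcases le_or_gt p 0 with hp | hp
  · rw [quantile_of_nonpos ν hp]
  · rcases eq_empty_or_nonempty {x | p ≤ mcdf ν x} with h | h
    · rw [quantile, h, Real.sInf_empty]
    · apply le_csInf h
      intro x hx
      by_contra hlt
      push_neg at hlt
      have h0 : ν (Iic x) = 0 := measure_mono_null (Iic_subset_Iio.mpr hlt) hν0
      have : mcdf ν x = 0 := by simp [mcdf, h0]
      simp only [mem_setOf_eq, this] at hx
      linarith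

lemma quantile_S_nonempty {p : ℝ} (hp : p < 1) : {x | p ≤ mcdf ν x}.Nonempty := by
  obtain ⟨x, hx⟩ := ((tendsto_mcdf_atTop ν).eventually (eventually_gt_nhds hp)).exists
  exact ⟨x, hx.le⟩

lemma quantile_S_bddBelow {p : ℝ} (hp : 0 < p) : BddBelow {x | p ≤ mcdf ν x} := by
  obtain ⟨b, hb⟩ :=
    Filter.eventually_atBot.mp ((tendsto_mcdf_atBot ν).eventually (eventually_lt_nhds hp))
  refine ⟨b, fun x hx => ?_⟩
  by_contra hxb
  push_neg at hxb
  have : mcdf ν x < p := hb x hxb.le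
  exact absurd hx (not_le.mpr this)

lemma quantile_S_isClosed (p : ℝ) : IsClosed {x | p ≤ mcdf ν x} := by
  rw [← isOpen_compl_iff, isOpen_iff_mem_nhds]
  intro x hx
  simp only [mem_compl_iff, mem_setOf_eq, not_le] at hx
  have h1 : ∀ᶠ y in nhdsWithin x (Ici x), mcdf ν y < p :=
    (mcdf_rightCont ν x).eventually (eventually_lt_nhds hx)
  obtain ⟨u, hu, hsub⟩ := mem_nhdsGE_iff_exists_Ico_subset.mp h1
  refine Filter.mem_of_superset (isOpen_Iio.mem_nhds hu) ?_
  intro y hy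
  simp only [mem_compl_iff, mem_setOf_eq, not_le]
  rcases lt_or_ge y x with h | h
  · exact lt_of_le_of_lt (mcdf_mono ν h.le) hx
  · exact hsub ⟨h, hy⟩

lemma quantile_monoOn (hν0 : ν (Iio 0) = 0) :
    MonotoneOn (quantile (mcdf ν)) (Iio (1:ℝ)) := by
  intro p hp q hq hpq
  rcases le_or_gt p 0 with h0 | h0
  · rw [quantile_of_nonpos ν h0]
    exact quantile_nonneg ν hν0 q
  · exact csInf_le_csInf (quantile_S_bddBelow ν h0) (quantile_S_nonempty ν hq)
      (fun x hx => le_trans hpq hx)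

lemma quantile_le_iff {p : ℝ} (hp0 : 0 < p)
    (hne : {x | p ≤ mcdf ν x}.Nonempty) (a : ℝ) :
    quantile (mcdf ν) p ≤ a ↔ p ≤ mcdf ν a := by
  have hbdd := quantile_S_bddBelow ν hp0
  have hmem : sInf {x | p ≤ mcdf ν x} ∈ {x | p ≤ mcdf ν x} :=
    (quantile_S_isClosed ν p).csInf_mem hne hbdd
  constructor
  · intro h
    exact le_trans hmem (mcdf_mono ν h)
  · intro h
    exact csInf_le hbdd h

end quantileAPI

section Lone
variable (ν : Measure ℝ) [IsProbabilityMeasure ν]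

lemma meas_mcdf_le (hF : Continuous (mcdf ν)) {u : ℝ} (hu0 : 0 ≤ u) (hu1 : u ≤ 1) :
    ν {x | mcdf ν x ≤ u} = ENNReal.ofReal u := by
  rcases eq_or_lt_of_le hu1 with hu1 | hu1
  · have hS : {x | mcdf ν x ≤ u} = univ :=
      eq_univ_of_forall fun x => hu1 ▸ (mcdf_le_one ν x)
    rw [hS, hu1]
    simp [measure_univ]
  · have hbdd : BddAbove {x | mcdf ν x ≤ u} := by
      by_contra hnb
      have hall : ∀ x : ℝ, mcdf ν x ≤ u := by
        intro x
        rw [not_bddAbove_iff] at hnb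
        obtain ⟨y, hy, hxy⟩ := hnb x
        exact le_trans (mcdf_mono ν hxy.le) hy
      have : (1:ℝ) ≤ u := le_of_tendsto (tendsto_mcdf_atTop ν) (Filter.Eventually.of_forall hall)
      linarith
    rcases eq_empty_or_nonempty {x | mcdf ν x ≤ u} with hS | hS
    · have hu : u = 0 := by
        by_contra hu
        have hu' : 0 < u := lt_of_le_of_ne hu0 (Ne.symm hu)
        obtain ⟨x, hx⟩ :=
          ((tendsto_mcdf_atBot ν).eventually (eventually_lt_nhds hu')).exists
        have hxm : x ∈ {x | mcdf ν x ≤ u} := hx.le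
        rw [hS] at hxm
        exact notMem_empty x hxm
      rw [hS, hu]
      simp
    · set m := sSup {x | mcdf ν x ≤ u} with hm
      have hcl : IsClosed {x | mcdf ν x ≤ u} := isClosed_Iic.preimage hF
      have hmem : m ∈ {x | mcdf ν x ≤ u} := hcl.csSup_mem hS hbdd
      have hSeq : {x | mcdf ν x ≤ u} = Iic m := by
        ext x
        constructor
        · intro hx; exact le_csSup hbdd hx
        · intro hx; exact le_trans (mcdf_mono ν hx) hmem
      have hFm : mcdf ν m = u := by
        refine le_antisymm hmem ?_
        by_contra hlt
        push_neg at hlt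
        have hev : ∀ᶠ x in nhdsWithin m (Ioi m), u ≤ mcdf ν x := by
          refine Filter.eventually_of_mem self_mem_nhdsWithin fun x hx => ?_
          by_contra hc
          push_neg at hc
          have : x ∈ Iic m := hSeq ▸ (hc.le : x ∈ {x | mcdf ν x ≤ u})
          exact absurd (mem_Iic.mp this) (not_le.mpr hx)
        have hct : ContinuousWithinAt (mcdf ν) (Ioi m) m := (hF.continuousAt).continuousWithinAt
        have := ge_of_tendsto hct hev
        linarith
      rw [hSeq, ← ofReal_mcdf, hFm]

lemma mcdf_atom (hF : Continuous (mcdf ν)) (s : ℝ) : ν {s} = 0 := by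
  have hbound : ∀ n : ℕ, ν {s} ≤ ENNReal.ofReal (mcdf ν s - mcdf ν (s - 1/(n+1))) := by
    intro n
    have hsub : {s} ⊆ Ioc (s - 1/(n+1)) s := by
      intro x hx
      rw [mem_singleton_iff] at hx
      subst hx
      constructor
      · have : (0:ℝ) < 1/(n+1) := by positivity
        linarith
      · exact le_refl _
    refine le_trans (measure_mono hsub) ?_
    have : Ioc (s - 1/(n+1)) s = Iic s \ Iic (s - 1/(n+1)) := by
      rw [Iic_sdiff_Iic]
    rw [this, measure_diff (Iic_subset_Iic.mpr (by linarith [(by positivity : (0:ℝ) < 1/(n+1))]))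
        nullMeasurableSet_Iic (measure_ne_top ν _)]
    rw [← ofReal_mcdf, ← ofReal_mcdf]
    exact le_of_eq (ENNReal.ofReal_sub _ (mcdf_nonneg ν _)).symm
  have htend : Filter.Tendsto
      (fun n : ℕ => ENNReal.ofReal (mcdf ν s - mcdf ν (s - 1/(n+1)))) Filter.atTop (nhds 0) := by
    have h1 : Filter.Tendsto (fun n : ℕ => s - 1/(n+1)) Filter.atTop (nhds s) := by
      have := tendsto_one_div_add_atTop_nhds_zero_nat (𝕜 := ℝ)
      have h2 := Filter.Tendsto.sub (tendsto_const_nhds (x := s) (f := Filter.atTop (α := ℕ))) this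
      simpa using h2
    have h3 : Filter.Tendsto (fun n : ℕ => mcdf ν s - mcdf ν (s - 1/(n+1)))
        Filter.atTop (nhds 0) := by
      have h4 := ((hF.tendsto s).comp h1)
      have h5 := Filter.Tendsto.sub (tendsto_const_nhds (x := mcdf ν s) (f := Filter.atTop (α := ℕ))) h4
      simpa using h5
    have := (ENNReal.continuous_ofReal.tendsto 0).comp h3
    simpa [Function.comp_def] using this
  have := ge_of_tendsto htend (Filter.Eventually.of_forall hbound)
  exact le_antisymm (by simpa using this) (zero_le)

end Lone

instance : IsProbabilityMeasure (volume.restrict (Ioo (0:ℝ) 1)) := by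
  constructor
  rw [Measure.restrict_apply_univ]
  simp [Real.volume_Ioo]

lemma map_quantile_volume (ν : Measure ℝ) [IsProbabilityMeasure ν] :
    (volume.restrict (Ioo (0:ℝ) 1)).map (quantile (mcdf ν)) = ν := by
  refine Measure.ext_of_Iic _ ν (fun a => ?_)
  rw [Measure.map_apply (quantile_measurable _) measurableSet_Iic,
    Measure.restrict_apply ((quantile_measurable _) measurableSet_Iic)]
  have hset : (quantile (mcdf ν) ⁻¹' Iic a) ∩ Ioo (0:ℝ) 1 = Ioo (0:ℝ) 1 ∩ Iic (mcdf ν a) := by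
    ext u
    simp only [mem_inter_iff, mem_preimage, mem_Iic, mem_Ioo]
    constructor
    · rintro ⟨hq, h0, h1⟩
      exact ⟨⟨h0, h1⟩, (quantile_le_iff ν h0 (quantile_S_nonempty ν h1) a).mp hq⟩
    · rintro ⟨⟨h0, h1⟩, hu⟩
      exact ⟨(quantile_le_iff ν h0 (quantile_S_nonempty ν h1) a).mpr hu, h0, h1⟩
  rw [hset]
  rcases lt_or_ge (mcdf ν a) 1 with hc | hc
  · have h2 : Ioo (0:ℝ) 1 ∩ Iic (mcdf ν a) = Ioc 0 (mcdf ν a) := by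
      ext u
      simp only [mem_inter_iff, mem_Ioo, mem_Iic, mem_Ioc]
      constructor
      · rintro ⟨⟨h0, _⟩, hu⟩; exact ⟨h0, hu⟩
      · rintro ⟨h0, hu⟩; exact ⟨⟨h0, lt_of_le_of_lt hu hc⟩, hu⟩
    rw [h2, Real.volume_Ioc, ← ofReal_mcdf]
    norm_num
  · have hc1 : mcdf ν a = 1 := le_antisymm (mcdf_le_one ν a) hc
    have h2 : Ioo (0:ℝ) 1 ∩ Iic (mcdf ν a) = Ioo 0 1 := by
      rw [hc1]
      exact inter_eq_self_of_subset_left (fun u hu => hu.2.le)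
    rw [h2, Real.volume_Ioo, ← ofReal_mcdf, hc1]
    norm_num

section OmegaLevel
variable {Ω : Type*} [MeasurableSpace Ω] (P Q : Measure Ω)
  [IsProbabilityMeasure P] [IsProbabilityMeasure Q]

lemma lr_measurable : Measurable (lr P Q) :=
  (Measure.measurable_rnDeriv P Q).ennreal_toReal

lemma lr_nonneg (ω : Ω) : 0 ≤ lr P Q ω := ENNReal.toReal_nonneg

variable {Z : Ω → ℝ} (hZ : Measurable Z)
include hZ

lemma rvCdf_measurable (hcont : Continuous (rvCdf P Z)) :
    Measurable (fun ω => rvCdf P Z (Z ω)) := (hcont.measurable).comp hZ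

lemma pit (hcont : Continuous (rvCdf P Z)) {u : ℝ} (hu0 : 0 ≤ u) (hu1 : u ≤ 1) :
    P {ω | rvCdf P Z (Z ω) ≤ u} = ENNReal.ofReal u := by
  haveI : IsProbabilityMeasure (P.map Z) := Measure.isProbabilityMeasure_map hZ.aemeasurable
  have h1 : {ω | rvCdf P Z (Z ω) ≤ u} = Z ⁻¹' {x | mcdf (P.map Z) x ≤ u} := rfl
  have h2 : MeasurableSet {x | mcdf (P.map Z) x ≤ u} := by
    have : {x | mcdf (P.map Z) x ≤ u} = (mcdf (P.map Z)) ⁻¹' Iic u := rfl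
    rw [this]
    exact (mcdf_mono (P.map Z)).measurable measurableSet_Iic
  rw [h1, ← Measure.map_apply hZ h2]
  exact meas_mcdf_le (P.map Z) hcont hu0 hu1

lemma pit_one_null (hcont : Continuous (rvCdf P Z)) :
    P {ω | rvCdf P Z (Z ω) = 1} = 0 := by
  have hbound : ∀ n : ℕ, P {ω | rvCdf P Z (Z ω) = 1} ≤ ENNReal.ofReal (1/(n+1)) := by
    intro n
    have hε : (0:ℝ) < 1/(n+1) := by positivity
    have hε1 : 1/((n:ℝ)+1) ≤ 1 := by
      rw [div_le_one (by positivity)]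
      linarith [Nat.cast_nonneg (α := ℝ) n]
    set Aε := {ω | rvCdf P Z (Z ω) ≤ 1 - 1/(n+1)} with hAε
    set A := {ω | rvCdf P Z (Z ω) ≤ 1} with hA
    have hsub : {ω | rvCdf P Z (Z ω) = 1} ⊆ A \ Aε := by
      intro ω hω
      simp only [mem_setOf_eq] at hω
      constructor
      · simp only [hA, mem_setOf_eq, hω, le_refl]
      · simp only [hAε, mem_setOf_eq, hω, not_le]
        linarith
    refine le_trans (measure_mono hsub) ?_
    have hmeas : MeasurableSet Aε := by
      have : Aε = (fun ω => rvCdf P Z (Z ω)) ⁻¹' Iic (1 - 1/(n+1)) := rfl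
      rw [this]
      exact (rvCdf_measurable P hZ hcont) measurableSet_Iic
    have h1ε : (1:ℝ) - 1/(n+1) ≤ 1 := by linarith
    have hsub2 : Aε ⊆ A := fun ω hω => le_trans hω h1ε
    rw [measure_diff hsub2 hmeas.nullMeasurableSet (measure_ne_top P _)]
    rw [pit P hZ hcont (by linarith) le_rfl, pit P hZ hcont (by linarith) (by linarith)]
    rw [← ENNReal.ofReal_sub _ (by linarith)]
    norm_num
  have htend : Filter.Tendsto (fun n : ℕ => ENNReal.ofReal (1/((n:ℝ)+1)))
      Filter.atTop (nhds 0) := by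
    have := (ENNReal.continuous_ofReal.tendsto 0).comp tendsto_one_div_add_atTop_nhds_zero_nat
    simpa [Function.comp_def] using this
  have := ge_of_tendsto htend (Filter.Eventually.of_forall hbound)
  exact le_antisymm (by simpa using this) (zero_le)

lemma atom_null (hcont : Continuous (rvCdf P Z)) (s : ℝ) : P {ω | Z ω = s} = 0 := by
  haveI : IsProbabilityMeasure (P.map Z) := Measure.isProbabilityMeasure_map hZ.aemeasurable
  have h1 : {ω | Z ω = s} = Z ⁻¹' {s} := rfl
  rw [h1, ← Measure.map_apply hZ (measurableSet_singleton s)]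
  exact mcdf_atom (P.map Z) hcont s

lemma map_quantile_comp (hcont : Continuous (rvCdf P Z)) (ν : Measure ℝ)
    [IsProbabilityMeasure ν] (hν0 : ν (Iio 0) = 0) :
    P.map (fun ω => quantile (mcdf ν) (rvCdf P Z (Z ω))) = ν := by
  haveI : IsProbabilityMeasure (P.map Z) := Measure.isProbabilityMeasure_map hZ.aemeasurable
  have hmeas : Measurable (fun ω => quantile (mcdf ν) (rvCdf P Z (Z ω))) :=
    (quantile_measurable _).comp (rvCdf_measurable P hZ hcont)
  haveI : IsProbabilityMeasure (P.map (fun ω => quantile (mcdf ν) (rvCdf P Z (Z ω)))) :=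
    Measure.isProbabilityMeasure_map hmeas.aemeasurable
  refine Measure.ext_of_Iic _ ν (fun a => ?_)
  rw [Measure.map_apply hmeas measurableSet_Iic]
  rcases lt_or_ge a 0 with ha | ha
  · have h1 : (fun ω => quantile (mcdf ν) (rvCdf P Z (Z ω))) ⁻¹' Iic a = ∅ := by
      apply eq_empty_of_forall_notMem
      intro ω hω
      simp only [mem_preimage, mem_Iic] at hω
      linarith [quantile_nonneg ν hν0 (rvCdf P Z (Z ω))]
    rw [h1]
    have h2 : ν (Iic a) = 0 := measure_mono_null (Iic_subset_Iio.mpr ha) hν0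
    simp [h2]
  · set A := (fun ω => quantile (mcdf ν) (rvCdf P Z (Z ω))) ⁻¹' Iic a with hAdef
    set B := {ω | rvCdf P Z (Z ω) ≤ mcdf ν a} with hBdef
    set N := {ω | rvCdf P Z (Z ω) = 1} with hNdef
    have hiff : ∀ ω, ω ∉ N → (ω ∈ A ↔ ω ∈ B) := by
      intro ω hωN
      have hp0 : 0 ≤ rvCdf P Z (Z ω) := mcdf_nonneg (P.map Z) (Z ω)
      have hp1 : rvCdf P Z (Z ω) < 1 :=
        lt_of_le_of_ne (mcdf_le_one (P.map Z) (Z ω)) hωN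
      simp only [hAdef, hBdef, mem_preimage, mem_Iic, mem_setOf_eq]
      rcases eq_or_lt_of_le hp0 with hp | hp
      · rw [quantile_of_nonpos ν hp.symm.le]
        constructor
        · intro _; rw [← hp]; exact mcdf_nonneg ν a
        · intro _; exact ha
      · exact quantile_le_iff ν hp (quantile_S_nonempty ν hp1) a
    have hnull : P N = 0 := pit_one_null P hZ hcont
    have hPA : P A = P B := by
      apply le_antisymm
      · have : A ⊆ B ∪ N := by
          intro ω hω
          by_cases hωN : ω ∈ N
          · exact Or.inr hωN
          · exact Or.inl ((hiff ω hωN).mp hω)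
        refine le_trans (measure_mono this) ?_
        refine le_trans (measure_union_le _ _) ?_
        rw [hnull, add_zero]
      · have : B ⊆ A ∪ N := by
          intro ω hω
          by_cases hωN : ω ∈ N
          · exact Or.inr hωN
          · exact Or.inl ((hiff ω hωN).mpr hω)
        refine le_trans (measure_mono this) ?_
        refine le_trans (measure_union_le _ _) ?_
        rw [hnull, add_zero]
    rw [hPA, hBdef]
    have : P {ω | rvCdf P Z (Z ω) ≤ mcdf ν a} = ENNReal.ofReal (mcdf ν a) :=
      pit P hZ hcont (mcdf_nonneg ν a) (mcdf_le_one ν a)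
    rw [this, ofReal_mcdf]

end OmegaLevel

lemma upperSet_cases (U : Set ℝ) (hU : ∀ x ∈ U, ∀ y, x ≤ y → y ∈ U) :
    U = ∅ ∨ U = univ ∨ ∃ s, Ioi s ⊆ U ∧ U ⊆ Ici s := by
  rcases eq_empty_or_nonempty U with h | h
  · exact Or.inl h
  by_cases hb : BddBelow U
  · refine Or.inr (Or.inr ⟨sInf U, ?_, ?_⟩)
    · intro y hy
      obtain ⟨x, hx, hxy⟩ := exists_lt_of_csInf_lt h hy
      exact hU x hx y hxy.le
    · intro x hx
      exact csInf_le hb hx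
  · refine Or.inr (Or.inl (eq_univ_of_forall fun y => ?_))
    rw [not_bddBelow_iff] at hb
    obtain ⟨x, hx, hxy⟩ := hb y
    exact hU x hx y hxy.le

section CE
variable {Ω : Type*} [MeasurableSpace Ω] (P Q : Measure Ω)
  [IsProbabilityMeasure P] [IsProbabilityMeasure Q]

lemma key_set (hPQ : P ≪ Q) (hQP : Q ≪ P) (s : ℝ) {A : Set Ω} (hA : MeasurableSet A)
    (hPA : P {ω | s < lr P Q ω} = P A) : Q {ω | s < lr P Q ω} ≤ Q A := by
  set B := {ω | s < lr P Q ω} with hBdef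
  have hBm : MeasurableSet B := measurableSet_lt measurable_const (lr_measurable P Q)
  rcases le_or_gt s 0 with hs | hs
  · have h1 : ∀ᵐ ω ∂P, ω ∈ B := by
      filter_upwards [Measure.rnDeriv_pos hPQ,
        hPQ.ae_le (Measure.rnDeriv_lt_top P Q)] with ω h0 hfin
      have hpos : 0 < lr P Q ω := ENNReal.toReal_pos h0.ne' hfin.ne
      exact lt_of_le_of_lt hs hpos
    have hPBc : P Bᶜ = 0 := ae_iff.mp h1
    have hPB : P B = 1 := by
      refine le_antisymm prob_le_one ?_
      have h0 : (1:ENNReal) = P univ := measure_univ.symm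
      rw [h0, ← union_compl_self B]
      refine le_trans (measure_union_le _ _) ?_
      rw [hPBc, add_zero]
    have hPAone : P A = 1 := hPA ▸ hPB
    have hPAc : P Aᶜ = 0 := (prob_compl_eq_zero_iff hA).mpr hPAone
    have hQAc : Q Aᶜ = 0 := hQP hPAc
    have hQA : Q A = 1 := by
      refine le_antisymm prob_le_one ?_
      have h0 : (1:ENNReal) = Q univ := measure_univ.symm
      rw [h0, ← union_compl_self A]
      refine le_trans (measure_union_le _ _) ?_
      rw [hQAc, add_zero]
    rw [hQA]
    exact prob_le_one
  · set k := ENNReal.ofReal s with hkdef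
    have hk0 : k ≠ 0 := (ENNReal.ofReal_pos.mpr hs).ne'
    have hkt : k ≠ ⊤ := ENNReal.ofReal_ne_top
    have hPdiff : P (B \ A) = P (A \ B) := by
      have h1 : P (B ∩ A) + P (B \ A) = P B := measure_inter_add_diff B hA
      have h2 : P (A ∩ B) + P (A \ B) = P A := measure_inter_add_diff A hBm
      rw [inter_comm] at h2
      have h3 : P (B ∩ A) + P (B \ A) = P (B ∩ A) + P (A \ B) := by
        rw [h1, h2, hPA]
      exact (ENNReal.add_right_inj (measure_ne_top P _)).mp h3
    have hinv : (fun ω => (P.rnDeriv Q ω)⁻¹) =ᵐ[P] Q.rnDeriv P := Measure.inv_rnDeriv hPQ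
    have hfin : ∀ᵐ ω ∂P, P.rnDeriv Q ω < ⊤ := hPQ.ae_le (Measure.rnDeriv_lt_top P Q)
    have claim1 : Q (B \ A) ≤ k⁻¹ * P (B \ A) := by
      have hmeas : MeasurableSet (B \ A) := hBm.diff hA
      rw [← Measure.setLIntegral_rnDeriv hQP (B \ A)]
      have hb : ∀ᵐ ω ∂(P.restrict (B \ A)), Q.rnDeriv P ω ≤ k⁻¹ := by
        rw [ae_restrict_iff' hmeas]
        filter_upwards [hinv, hfin] with ω h1 h2 hω
        rw [← h1]
        have hofr : ENNReal.ofReal (lr P Q ω) = P.rnDeriv Q ω := by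
          rw [lr]; exact ENNReal.ofReal_toReal h2.ne
        have hkle : k ≤ P.rnDeriv Q ω := by
          rw [← hofr, hkdef]
          exact ENNReal.ofReal_le_ofReal hω.1.le
        exact ENNReal.inv_le_inv' hkle
      calc ∫⁻ ω in B \ A, Q.rnDeriv P ω ∂P ≤ ∫⁻ _ω in B \ A, k⁻¹ ∂P := lintegral_mono_ae hb
        _ = k⁻¹ * P (B \ A) := by rw [setLIntegral_const]
    have claim2 : k⁻¹ * P (A \ B) ≤ Q (A \ B) := by
      have hmeas : MeasurableSet (A \ B) := hA.diff hBm
      rw [← Measure.setLIntegral_rnDeriv hQP (A \ B)]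
      have hb : ∀ᵐ ω ∂(P.restrict (A \ B)), k⁻¹ ≤ Q.rnDeriv P ω := by
        rw [ae_restrict_iff' hmeas]
        filter_upwards [hinv, hfin] with ω h1 h2 hω
        rw [← h1]
        have hofr : ENNReal.ofReal (lr P Q ω) = P.rnDeriv Q ω := by
          rw [lr]; exact ENNReal.ofReal_toReal h2.ne
        have hle : P.rnDeriv Q ω ≤ k := by
          rw [← hofr, hkdef]
          have : lr P Q ω ≤ s := not_lt.mp hω.2
          exact ENNReal.ofReal_le_ofReal this
        exact ENNReal.inv_le_inv' hle
      calc k⁻¹ * P (A \ B) = ∫⁻ _ω in A \ B, k⁻¹ ∂P := by rw [setLIntegral_const]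
        _ ≤ ∫⁻ ω in A \ B, Q.rnDeriv P ω ∂P := lintegral_mono_ae hb
    calc Q B = Q (B ∩ A) + Q (B \ A) := (measure_inter_add_diff B hA).symm
      _ ≤ Q (B ∩ A) + k⁻¹ * P (B \ A) := by gcongr
      _ = Q (B ∩ A) + k⁻¹ * P (A \ B) := by rw [hPdiff]
      _ ≤ Q (B ∩ A) + Q (A \ B) := by gcongr
      _ = Q (A ∩ B) + Q (A \ B) := by rw [inter_comm]
      _ = Q A := measure_inter_add_diff A hBm

lemma measure_eq_of_diff_null {Ω : Type*} [MeasurableSpace Ω] (μ : Measure Ω) (A B : Set Ω)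
    (h1 : μ (A \ B) = 0) (h2 : μ (B \ A) = 0) : μ A = μ B := by
  have key : ∀ C D : Set Ω, μ (C \ D) = 0 → μ C ≤ μ D := by
    intro C D h
    calc μ C ≤ μ (D ∪ (C \ D)) := measure_mono (fun x hx => by
          by_cases hh : x ∈ D
          · exact Or.inl hh
          · exact Or.inr ⟨hx, hh⟩)
      _ ≤ μ D + μ (C \ D) := measure_union_le _ _
      _ = μ D := by rw [h, add_zero]
  exact le_antisymm (key A B h1) (key B A h2)

lemma ce_core (hPQ : P ≪ Q) (hQP : Q ≪ P) {X Y : Ω → ℝ}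
    (hX : Measurable X) (hXnn : ∀ ω, 0 ≤ X ω)
    (hY : Measurable Y) (hYnn : ∀ ω, 0 ≤ Y ω)
    (hlevel : ∀ t : ℝ, 0 < t → P {ω | t < X ω} = 0 ∨
      ∃ s : ℝ, P ({ω | t < X ω} \ {ω | s < lr P Q ω}) = 0 ∧
        P ({ω | s < lr P Q ω} \ {ω | t < X ω}) = 0)
    (hmap : P.map X = P.map Y) :
    ∫⁻ ω, ENNReal.ofReal (X ω) ∂Q ≤ ∫⁻ ω, ENNReal.ofReal (Y ω) ∂Q := by
  have hXnnae : 0 ≤ᵐ[Q] X := Filter.Eventually.of_forall hXnn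
  have hYnnae : 0 ≤ᵐ[Q] Y := Filter.Eventually.of_forall hYnn
  rw [lintegral_eq_lintegral_meas_lt Q hXnnae hX.aemeasurable,
      lintegral_eq_lintegral_meas_lt Q hYnnae hY.aemeasurable]
  refine lintegral_mono_ae ?_
  rw [ae_restrict_iff' measurableSet_Ioi]
  refine Filter.Eventually.of_forall (fun t ht => ?_)
  rcases hlevel t ht with hnull | ⟨s, h1, h2⟩
  · have : Q {a | t < X a} = 0 := hQP hnull
    rw [this]
    exact zero_le
  · have hPXY : P {ω | t < X ω} = P {ω | t < Y ω} := by
      have e1 : {ω | t < X ω} = X ⁻¹' (Ioi t) := rfl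
      have e2 : {ω | t < Y ω} = Y ⁻¹' (Ioi t) := rfl
      rw [e1, e2, ← Measure.map_apply hX measurableSet_Ioi, hmap,
        Measure.map_apply hY measurableSet_Ioi]
    have hPsX : P {ω | s < lr P Q ω} = P {ω | t < X ω} :=
      measure_eq_of_diff_null P _ _ h2 h1
    have hQsX : Q {ω | t < X ω} = Q {ω | s < lr P Q ω} :=
      measure_eq_of_diff_null Q _ _ (hQP h1) (hQP h2)
    have hkey : Q {ω | s < lr P Q ω} ≤ Q {ω | t < Y ω} := by
      refine key_set P Q hPQ hQP s ?_ ?_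
      · exact hY measurableSet_Ioi
      · rw [hPsX, hPXY]
    rw [hQsX]
    exact hkey

lemma quantile_hlevel (hQP : Q ≪ P) (hcont : Continuous (rvCdf P (lr P Q)))
    (ν : Measure ℝ) [IsProbabilityMeasure ν] (hν0 : ν (Iio 0) = 0) (t : ℝ) (ht : 0 < t) :
    P {ω | t < quantile (mcdf ν) (rvCdf P (lr P Q) (lr P Q ω))} = 0 ∨
    ∃ s : ℝ, P ({ω | t < quantile (mcdf ν) (rvCdf P (lr P Q) (lr P Q ω))} \ {ω | s < lr P Q ω}) = 0 ∧
      P ({ω | s < lr P Q ω} \ {ω | t < quantile (mcdf ν) (rvCdf P (lr P Q) (lr P Q ω))}) = 0 := by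
  haveI : IsProbabilityMeasure (P.map (lr P Q)) :=
    Measure.isProbabilityMeasure_map (lr_measurable P Q).aemeasurable
  set ℓ := lr P Q with hℓdef
  set F := rvCdf P ℓ with hFdef
  set q := quantile (mcdf ν) with hqdef
  set W : Set ℝ := {x | t < q (F x)} with hWdef
  set T : Set ℝ := {x | F x = 1} with hTdef
  set W' : Set ℝ := W \ T with hW'def
  set W'' : Set ℝ := {x | ∃ x' ∈ W', x' ≤ x} with hW''def
  have hFmono : Monotone F := mcdf_mono (P.map ℓ)
  have hFle1 : ∀ x, F x ≤ 1 := mcdf_le_one (P.map ℓ)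
  have hTnull : P (ℓ ⁻¹' T) = 0 := pit_one_null P (lr_measurable P Q) hcont
  have hXW : {ω | t < q (F (ℓ ω))} = ℓ ⁻¹' W := rfl
  have hW'mem : ∀ x' ∈ W', ∀ x, x' ≤ x → x ∉ T → x ∈ W' := by
    intro x' hx' x hle hxT
    have hFx1 : F x < 1 := lt_of_le_of_ne (hFle1 x) hxT
    have hFx'1 : F x' < 1 := lt_of_le_of_ne (hFle1 x') hx'.2
    have hmono := quantile_monoOn ν hν0 (mem_Iio.mpr hFx'1) (mem_Iio.mpr hFx1) (hFmono hle)
    exact ⟨lt_of_lt_of_le hx'.1 hmono, hxT⟩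
  have hW''sub : W'' \ T ⊆ W' := by
    rintro x ⟨⟨x', hx', hle⟩, hxT⟩
    exact hW'mem x' hx' x hle hxT
  have hW'subW'' : W' ⊆ W'' := fun x hx => ⟨x, hx, le_refl x⟩
  have hWdiff1 : W \ W'' ⊆ T := by
    intro x hx
    by_contra hxT
    exact hx.2 (hW'subW'' ⟨hx.1, hxT⟩)
  have hWdiff2 : W'' \ W ⊆ T := by
    intro x hx
    by_contra hxT
    exact hx.2 (hW''sub ⟨hx.1, hxT⟩).1
  have hW''up : ∀ x ∈ W'', ∀ y, x ≤ y → y ∈ W'' := by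
    rintro x ⟨x', hx', hle⟩ y hxy
    exact ⟨x', hx', le_trans hle hxy⟩
  rcases upperSet_cases W'' hW''up with hc | hc | ⟨s, hIoi, hIci⟩
  · left
    have : W ⊆ T := by
      intro x hx
      by_contra hxT
      rw [hc] at hW'subW''
      exact (hW'subW'' ⟨hx, hxT⟩)
    rw [hXW]
    exact measure_mono_null (fun ω hω => this hω) hTnull
  · right
    refine ⟨-1, ?_, ?_⟩
    · have : {ω | t < q (F (ℓ ω))} \ {ω | -1 < ℓ ω} = ∅ := by
        apply eq_empty_of_forall_notMem
        intro ω hω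
        exact hω.2 (lt_of_lt_of_le (by norm_num) (lr_nonneg P Q ω))
      rw [this]
      exact measure_empty
    · refine measure_mono_null ?_ hTnull
      intro ω hω
      have hWx : ℓ ω ∉ W := hω.2
      have : ℓ ω ∈ W'' := hc ▸ mem_univ (ℓ ω)
      exact hWdiff2 ⟨this, hWx⟩
  · right
    have hatom : P {ω | ℓ ω = s} = 0 := atom_null P (lr_measurable P Q) hcont s
    refine ⟨s, ?_, ?_⟩
    · refine measure_mono_null ?_ (measure_union_null hTnull hatom)
      intro ω hω
      have h1 : ℓ ω ∈ W := hω.1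
      have h2 : ¬ s < ℓ ω := hω.2
      by_cases hT : ℓ ω ∈ T
      · exact Or.inl hT
      · have : ℓ ω ∈ W'' := hW'subW'' ⟨h1, hT⟩
        have hge : s ≤ ℓ ω := hIci this
        exact Or.inr (le_antisymm (not_lt.mp h2) hge)
    · refine measure_mono_null ?_ hTnull
      intro ω hω
      have : ℓ ω ∈ W'' := hIoi hω.1
      exact hWdiff2 ⟨this, hω.2⟩

end CE

section Int

lemma lintegral_ofReal_eq_of_integrable {Ω : Type*} [MeasurableSpace Ω] {μ : Measure Ω}
    {g : Ω → ℝ} (hgnn : ∀ ω, 0 ≤ g ω) (hgi : Integrable g μ) :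
    ∫⁻ ω, ENNReal.ofReal (g ω) ∂μ < ⊤ := hgi.lintegral_lt_top

lemma integrable_of_lintegral_lt {Ω : Type*} [MeasurableSpace Ω] {μ : Measure Ω}
    {g : Ω → ℝ} (hm : Measurable g) (hgnn : ∀ ω, 0 ≤ g ω)
    (h : ∫⁻ ω, ENNReal.ofReal (g ω) ∂μ < ⊤) : Integrable g μ := by
  refine ⟨hm.aestronglyMeasurable, ?_⟩
  rw [hasFiniteIntegral_iff_ofReal (Filter.Eventually.of_forall hgnn)]
  exact h

lemma integral_le_of_lintegral_le {Ω : Type*} [MeasurableSpace Ω] {μ : Measure Ω}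
    {f g : Ω → ℝ} (hfm : AEStronglyMeasurable f μ) (hgi : Integrable g μ)
    (hfnn : ∀ ω, 0 ≤ f ω) (hgnn : ∀ ω, 0 ≤ g ω)
    (h : ∫⁻ ω, ENNReal.ofReal (f ω) ∂μ ≤ ∫⁻ ω, ENNReal.ofReal (g ω) ∂μ) :
    ∫ ω, f ω ∂μ ≤ ∫ ω, g ω ∂μ := by
  rw [integral_eq_lintegral_of_nonneg_ae (Filter.Eventually.of_forall hfnn) hfm,
      integral_eq_lintegral_of_nonneg_ae (Filter.Eventually.of_forall hgnn)
        hgi.aestronglyMeasurable]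
  exact ENNReal.toReal_mono hgi.lintegral_lt_top.ne h

variable {Ω : Type*} [MeasurableSpace Ω] (Q Pstar : Measure Ω)
  [IsProbabilityMeasure Q] [IsProbabilityMeasure Pstar]

lemma star_lintegral_lt_top (hPQ : Pstar ≪ Q) (hQP : Q ≪ Pstar)
    (μ₀ : Measure ℝ) [IsProbabilityMeasure μ₀] (hsupp : μ₀ (Iio 0) = 0)
    (hsq : IntegrableOn (fun u => (quantile (mcdf μ₀) u) ^ 2) (Ioo (0:ℝ) 1) volume)
    (hcont : Continuous (rvCdf Pstar (lr Pstar Q)))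
    (hvar : Integrable (fun ω => (1 / lr Pstar Q ω) ^ 2) Pstar) :
    ∫⁻ ω, ENNReal.ofReal
      (quantile (mcdf μ₀) (rvCdf Pstar (lr Pstar Q) (lr Pstar Q ω))) ∂Q < ⊤ := by
  set ℓ := lr Pstar Q with hℓdef
  set q0 := quantile (mcdf μ₀) with hq0def
  set Xs := fun ω => q0 (rvCdf Pstar ℓ (ℓ ω)) with hXsdef
  have hℓm : Measurable ℓ := lr_measurable Pstar Q
  have hXsm : Measurable Xs :=
    (quantile_measurable _).comp ((hcont.measurable).comp hℓm)
  have hXsnn : ∀ ω, 0 ≤ Xs ω := fun ω => quantile_nonneg μ₀ hsupp _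
  -- rewrite Q-lintegral as Pstar-lintegral against the density
  have hwd : Pstar.withDensity (Q.rnDeriv Pstar) = Q := Measure.withDensity_rnDeriv_eq Q Pstar hQP
  have h1 : ∫⁻ ω, ENNReal.ofReal (Xs ω) ∂Q
      = ∫⁻ ω, (Q.rnDeriv Pstar * fun ω' => ENNReal.ofReal (Xs ω')) ω ∂Pstar := by
    conv_lhs => rw [← hwd]
    exact lintegral_withDensity_eq_lintegral_mul Pstar (Measure.measurable_rnDeriv Q Pstar)
      (ENNReal.measurable_ofReal.comp hXsm)
  rw [h1]
  have hconj : Real.HolderConjugate 2 2 := Real.HolderConjugate.two_two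
  have holder := ENNReal.lintegral_mul_le_Lp_mul_Lq Pstar hconj
    (Measure.measurable_rnDeriv Q Pstar).aemeasurable
    ((ENNReal.measurable_ofReal.comp hXsm)).aemeasurable
  refine lt_of_le_of_lt holder ?_
  have factor1 : ∫⁻ ω, (Q.rnDeriv Pstar ω) ^ (2:ℝ) ∂Pstar < ⊤ := by
    have hae : (fun ω => (Q.rnDeriv Pstar ω) ^ (2:ℝ))
        =ᵐ[Pstar] (fun ω => ENNReal.ofReal ((1 / ℓ ω) ^ 2)) := by
      have hinv : (fun ω => (Pstar.rnDeriv Q ω)⁻¹) =ᵐ[Pstar] Q.rnDeriv Pstar :=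
        Measure.inv_rnDeriv hPQ
      have hfin : ∀ᵐ ω ∂Pstar, Pstar.rnDeriv Q ω < ⊤ :=
        hPQ.ae_le (Measure.rnDeriv_lt_top Pstar Q)
      have hpos : ∀ᵐ ω ∂Pstar, 0 < Pstar.rnDeriv Q ω := Measure.rnDeriv_pos hPQ
      filter_upwards [hinv, hfin, hpos] with ω hω1 hω2 hω3
      have hℓpos : 0 < ℓ ω := ENNReal.toReal_pos hω3.ne' hω2.ne
      have hofr : ENNReal.ofReal (ℓ ω) = Pstar.rnDeriv Q ω := ENNReal.ofReal_toReal hω2.ne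
      rw [← hω1, ← hofr]
      rw [← ENNReal.ofReal_inv_of_pos hℓpos]
      rw [ENNReal.ofReal_rpow_of_nonneg (by positivity) (by norm_num)]
      congr 1
      rw [one_div, ← Real.rpow_natCast (ℓ ω)⁻¹ 2]
      norm_num
    rw [lintegral_congr_ae hae]
    exact hvar.lintegral_lt_top
  have factor2 : ∫⁻ ω, (ENNReal.ofReal (Xs ω)) ^ (2:ℝ) ∂Pstar < ⊤ := by
    have he : ∀ ω, (ENNReal.ofReal (Xs ω)) ^ (2:ℝ) = ENNReal.ofReal ((Xs ω) ^ 2) := by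
      intro ω
      rw [ENNReal.ofReal_rpow_of_nonneg (hXsnn ω) (by norm_num)]
      congr 1
      rw [← Real.rpow_natCast (Xs ω) 2]
      norm_num
    simp_rw [he]
    have hmap : Pstar.map Xs = μ₀ := map_quantile_comp Pstar hℓm hcont μ₀ hsupp
    have h2 : ∫⁻ ω, ENNReal.ofReal ((Xs ω) ^ 2) ∂Pstar
        = ∫⁻ x, ENNReal.ofReal (x ^ 2) ∂μ₀ := by
      rw [← hmap, lintegral_map (by measurability) hXsm]
    rw [h2, ← map_quantile_volume μ₀,
      lintegral_map (by measurability) (quantile_measurable _)]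
    have := (hsq.2 : HasFiniteIntegral _ _)
    rw [hasFiniteIntegral_iff_ofReal (Filter.Eventually.of_forall (fun u => by positivity))] at this
    exact this
  have f1 : (∫⁻ ω, (Q.rnDeriv Pstar ω) ^ (2:ℝ) ∂Pstar) ^ (1/(2:ℝ)) < ⊤ :=
    ENNReal.rpow_lt_top_of_nonneg (by norm_num) factor1.ne
  have f2 : (∫⁻ ω, (ENNReal.ofReal (Xs ω)) ^ (2:ℝ) ∂Pstar) ^ (1/(2:ℝ)) < ⊤ :=
    ENNReal.rpow_lt_top_of_nonneg (by norm_num) factor2.ne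
  exact ENNReal.mul_lt_top f1 f2

end Int

end Aux

/-- ambiguity increases the cost: under the assumptions of the robust
cost-efficiency theorem, for `P ∈ Ps` with continuous `F_{ℓ^P}^P`, the cost of the
classical cost-efficient payoff `X = F₀⁻¹(F_{ℓ^P}^P(ℓ^P))` is at most that of the robust
cost-efficient payoff `X* = F₀⁻¹(F_{ℓ*}^{P*}(ℓ*))`, strictly if `F_X^P ≠ F_{X*}^P`. -/
theorem stmt6 {Ω : Type*} [MeasurableSpace Ω]
    (Q : Measure Ω) [IsProbabilityMeasure Q] (r T : ℝ) (hT : 0 < T)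
    (Ps : Set (Measure Ω))
    (hPsprob : ∀ P ∈ Ps, IsProbabilityMeasure P)
    (hPsequiv : ∀ P ∈ Ps, P ≪ Q ∧ Q ≪ P)
    (𝔽 : Set (ℝ → ℝ)) (h𝔽meas : ∀ f ∈ 𝔽, Measurable (fun x : Ici (0:ℝ) => f x))
    -- (A1)
    (μ₀ : Measure ℝ) (hμ₀ : IsProbabilityMeasure μ₀)
    (hsupp : μ₀ (Iio 0) = 0)
    (hsq : IntegrableOn (fun u => (quantile (mcdf μ₀) u) ^ 2) (Ioo (0:ℝ) 1) volume)
    -- (A2)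
    (hcomp : CompConsistent 𝔽) (hcost : CostConsistent Q Ps 𝔽)
    -- (A3)
    (Pstar : Measure Ω) (hPstar : Pstar ∈ Ps)
    (hLF : ∀ P ∈ Ps, IntOrder 𝔽 (Pstar.map (lr Pstar Q)) (P.map (lr Pstar Q)))
    -- (A4)
    (hcont : Continuous (rvCdf Pstar (lr Pstar Q)))
    (hvar : Integrable (fun ω => (1 / lr Pstar Q ω) ^ 2) Pstar)
    -- `F₀⁻¹ ∘ F_{ℓ*}^{P*} ∈ 𝔽`
    (hqf : (fun x => quantile (mcdf μ₀) (rvCdf Pstar (lr Pstar Q) x)) ∈ 𝔽)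
    -- the unambiguous investor's measure `P ∈ Ps`
    (P : Measure Ω) (hP : P ∈ Ps)
    (hcontP : Continuous (rvCdf P (lr P Q)))
    (hXint : Integrable (fun ω => quantile (mcdf μ₀) (rvCdf P (lr P Q) (lr P Q ω))) Q) :
    (∫ ω, quantile (mcdf μ₀) (rvCdf P (lr P Q) (lr P Q ω)) ∂Q ≤
      ∫ ω, quantile (mcdf μ₀) (rvCdf Pstar (lr Pstar Q) (lr Pstar Q ω)) ∂Q) ∧
    (P.map (fun ω => quantile (mcdf μ₀) (rvCdf P (lr P Q) (lr P Q ω))) ≠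
        P.map (fun ω => quantile (mcdf μ₀) (rvCdf Pstar (lr Pstar Q) (lr Pstar Q ω))) →
      ∫ ω, quantile (mcdf μ₀) (rvCdf P (lr P Q) (lr P Q ω)) ∂Q <
        ∫ ω, quantile (mcdf μ₀) (rvCdf Pstar (lr Pstar Q) (lr Pstar Q ω)) ∂Q) := by

  haveI hPprob : IsProbabilityMeasure P := hPsprob P hP
  haveI hPsprob' : IsProbabilityMeasure Pstar := hPsprob Pstar hPstar
  haveI hμ₀i : IsProbabilityMeasure μ₀ := hμ₀
  obtain ⟨hPQ, hQP⟩ := hPsequiv P hP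
  obtain ⟨hPsQ, hQPs⟩ := hPsequiv Pstar hPstar
  set ℓ := lr P Q with hℓ
  set ℓs := lr Pstar Q with hℓsdef
  set q0 := quantile (mcdf μ₀) with hq0
  set X := fun ω => q0 (rvCdf P ℓ (ℓ ω)) with hXdef
  set Xs := fun ω => q0 (rvCdf Pstar ℓs (ℓs ω)) with hXsdef
  have hℓm : Measurable ℓ := lr_measurable P Q
  have hℓsm : Measurable ℓs := lr_measurable Pstar Q
  have hXm : Measurable X := (quantile_measurable _).comp (hcontP.measurable.comp hℓm)
  have hXsm : Measurable Xs := (quantile_measurable _).comp (hcont.measurable.comp hℓsm)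
  have hXnn : ∀ ω, 0 ≤ X ω := fun ω => quantile_nonneg μ₀ hsupp _
  have hXsnn : ∀ ω, 0 ≤ Xs ω := fun ω => quantile_nonneg μ₀ hsupp _
  set ν := P.map Xs with hνdef
  haveI : IsProbabilityMeasure ν := Measure.isProbabilityMeasure_map hXsm.aemeasurable
  have hν0 : ν (Iio 0) = 0 := by
    rw [hνdef, Measure.map_apply hXsm measurableSet_Iio]
    have he : Xs ⁻¹' (Iio 0) = ∅ := by
      apply eq_empty_of_forall_notMem
      intro ω hω
      exact absurd (hXsnn ω) (not_le.mpr hω)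
    rw [he]
    exact measure_empty
  set Y := fun ω => quantile (mcdf ν) (rvCdf P ℓ (ℓ ω)) with hYdef
  have hYm : Measurable Y := (quantile_measurable _).comp (hcontP.measurable.comp hℓm)
  have hYnn : ∀ ω, 0 ≤ Y ω := fun ω => quantile_nonneg ν hν0 _
  have hmapX : P.map X = μ₀ := map_quantile_comp P hℓm hcontP μ₀ hsupp
  have hmapXsP : Pstar.map Xs = μ₀ := map_quantile_comp Pstar hℓsm hcont μ₀ hsupp
  have hmapY : P.map Y = ν := map_quantile_comp P hℓm hcontP ν hν0
  have hXs_lint : ∫⁻ ω, ENNReal.ofReal (Xs ω) ∂Q < ⊤ :=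
    star_lintegral_lt_top Q Pstar hPsQ hQPs μ₀ hsupp hsq hcont hvar
  have hXs_int : Integrable Xs Q := integrable_of_lintegral_lt hXsm hXsnn hXs_lint
  have hYXs_lint : ∫⁻ ω, ENNReal.ofReal (Y ω) ∂Q ≤ ∫⁻ ω, ENNReal.ofReal (Xs ω) ∂Q :=
    ce_core P Q hPQ hQP hYm hYnn hXsm hXsnn
      (fun t ht => quantile_hlevel P Q hQP hcontP ν hν0 t ht) (by rw [hmapY, hνdef])
  have hY_int : Integrable Y Q :=
    integrable_of_lintegral_lt hYm hYnn (lt_of_le_of_lt hYXs_lint hXs_lint)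
  have hYXs : ∫ ω, Y ω ∂Q ≤ ∫ ω, Xs ω ∂Q :=
    integral_le_of_lintegral_le hYm.aestronglyMeasurable hXs_int hYnn hXsnn hYXs_lint
  have ceX : CostEfficient Q P X := by
    refine ⟨⟨hXm, hXnn, hXint⟩, ?_⟩
    intro Z hZ hmapZ
    refine integral_le_of_lintegral_le hXm.aestronglyMeasurable hZ.2.2 hXnn hZ.2.1 ?_
    exact ce_core P Q hPQ hQP hXm hXnn hZ.1 hZ.2.1
      (fun t ht => quantile_hlevel P Q hQP hcontP μ₀ hsupp t ht) hmapZ.symm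
  have ceY : CostEfficient Q P Y := by
    refine ⟨⟨hYm, hYnn, hY_int⟩, ?_⟩
    intro Z hZ hmapZ
    refine integral_le_of_lintegral_le hYm.aestronglyMeasurable hZ.2.2 hYnn hZ.2.1 ?_
    exact ce_core P Q hPQ hQP hYm hYnn hZ.1 hZ.2.1
      (fun t ht => quantile_hlevel P Q hQP hcontP ν hν0 t ht) hmapZ.symm
  have hIO : IntOrder 𝔽 (P.map X) (P.map Y) := by
    rw [hmapX, hmapY]
    intro f hf int1 int2
    set gs := fun x => q0 (rvCdf Pstar ℓs x) with hgsdef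
    have hgsm : Measurable gs := (quantile_measurable _).comp hcont.measurable
    have hfg : (f ∘ gs) ∈ 𝔽 := hcomp f hf _ hqf
    have hmm1 : (Pstar.map ℓs).map gs = μ₀ := by
      rw [Measure.map_map hgsm hℓsm]
      exact hmapXsP
    have hmm2 : (P.map ℓs).map gs = ν := by
      rw [Measure.map_map hgsm hℓsm, hνdef]
      rfl
    have hasm1 : AEStronglyMeasurable f ((Pstar.map ℓs).map gs) := by
      rw [hmm1]; exact int1.aestronglyMeasurable
    have hasm2 : AEStronglyMeasurable f ((P.map ℓs).map gs) := by
      rw [hmm2]; exact int2.aestronglyMeasurable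
    have hint1 : Integrable (f ∘ gs) (Pstar.map ℓs) :=
      (integrable_map_measure hasm1 hgsm.aemeasurable).mp (by rw [hmm1]; exact int1)
    have hint2 : Integrable (f ∘ gs) (P.map ℓs) :=
      (integrable_map_measure hasm2 hgsm.aemeasurable).mp (by rw [hmm2]; exact int2)
    have hLFa := hLF P hP (f ∘ gs) hfg hint1 hint2
    have e1 : ∫ x, f x ∂μ₀ = ∫ x, (f ∘ gs) x ∂(Pstar.map ℓs) := by
      rw [← hmm1, integral_map hgsm.aemeasurable hasm1]
      rfl
    have e2 : ∫ x, f x ∂ν = ∫ x, (f ∘ gs) x ∂(P.map ℓs) := by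
      rw [← hmm2, integral_map hgsm.aemeasurable hasm2]
      rfl
    rw [e1, e2]
    exact hLFa
  obtain ⟨hle, hstrict⟩ := hcost P hP X Y ceX ceY hIO
  have hYeqXs : P.map Y = P.map Xs := hmapY
  constructor
  · exact le_trans hle hYXs
  · intro hne
    have hne' : P.map X ≠ P.map Y := fun h => hne (h.trans hYeqXs)
    exact lt_of_lt_of_le (hstrict hne') hYXs
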